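/- Let p, u > 0 with p ≠ u and define f(x) = d( p/(p+x) | u/(u+x) ) for x > 0, where d(q|r) = q·log(q/r) + (1−q)·log((1−q)/(1−r)). Then f(x) = log((u+x)/(p+x)) − (p/(p+x))·log(u/p), and f'(x) = ( (p − u + p·log(u/p))·x + p² + u·p·(log(u/p) − 1) ) / ( (p+x)²·(u+x) ). Moreover, with x*(p,u) = ( p·u − p² − p·u·log(u/p) ) / ( p − u + p·log(u/p) ), one has x*(p,u) > 0, f'(x) > 0 for 0 < x < x*(p,u), and f'(x) < 0 for x > x*(p,u). -/

import Mathlib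

/-- Kullback–Leibler divergence between Bernoulli distributions with means `q` and `r`. -/
noncomputable def klBern (q r : ℝ) : ℝ :=
  q * Real.log (q / r) + (1 - q) * Real.log ((1 - q) / (1 - r))

/-- Lemma B.5 for h(x,p) = p/(p+x): explicit form of the KL divergence curve
f(x) = d(h(x,p)|h(x,u)), its derivative, and unimodality with maximizer x*(p,u). -/
theorem kl_curve_explicit
    (p u : ℝ) (hp : 0 < p) (hu : 0 < u) (hne : p ≠ u)
    (f : ℝ → ℝ)
    (hf : ∀ x, f x = klBern (p / (p + x)) (u / (u + x)))
    (xs : ℝ)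
    (hxs : xs = (p * u - p ^ 2 - p * u * Real.log (u / p)) /
        (p - u + p * Real.log (u / p))) :
    (∀ x > (0:ℝ), f x = Real.log ((u + x) / (p + x)) - (p / (p + x)) * Real.log (u / p)) ∧
    (∀ x > (0:ℝ), deriv f x =
        ((p - u + p * Real.log (u / p)) * x + p ^ 2 + u * p * (Real.log (u / p) - 1)) /
          ((p + x) ^ 2 * (u + x))) ∧
    0 < xs ∧
    (∀ x : ℝ, 0 < x → x < xs → 0 < deriv f x) ∧
    (∀ x : ℝ, xs < x → deriv f x < 0) := by
  set L := Real.log (u / p) with hL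
  have hune : u ≠ p := fun h => hne h.symm
  -- D < 0
  have hD : p - u + p * L < 0 := by
    have h1 : Real.log (u / p) < u / p - 1 := by
      apply Real.log_lt_sub_one_of_pos (div_pos hu hp)
      rw [Ne, div_eq_one_iff_eq hp.ne']
      exact hune
    have := (lt_div_iff₀ hp).mp (by linarith : Real.log (u/p) + 1 < u / p)
    nlinarith
  -- N < 0
  have hN : p * u - p ^ 2 - p * u * L < 0 := by
    have h2 : Real.log (p / u) < p / u - 1 := by
      apply Real.log_lt_sub_one_of_pos (div_pos hp hu)
      rw [Ne, div_eq_one_iff_eq hu.ne']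
      exact hne
    have hlog : Real.log (p / u) = -L := by
      rw [hL, ← Real.log_inv, inv_div]
    rw [hlog] at h2
    have := (lt_div_iff₀ hu).mp (by linarith : -L + 1 < p / u)
    nlinarith
  have hxspos : 0 < xs := by
    rw [hxs]
    exact div_pos_of_neg_of_neg hN hD
  -- explicit form
  have hform : ∀ x > (0:ℝ), f x = Real.log ((u + x) / (p + x)) - (p / (p + x)) * L := by
    intro x hx
    have hpx : (0:ℝ) < p + x := by linarith
    have hux : (0:ℝ) < u + x := by linarith
    rw [hf, klBern]
    have e1 : 1 - p / (p + x) = x / (p + x) := by field_simp; ring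
    have e2 : 1 - u / (u + x) = x / (u + x) := by field_simp; ring
    have e3 : p / (p + x) / (u / (u + x)) = p * (u + x) / (u * (p + x)) := by
      field_simp
    have e4 : x / (p + x) / (x / (u + x)) = (u + x) / (p + x) := by
      field_simp
    rw [e1, e2, e3, e4, Real.log_div (mul_pos hp hux).ne' (mul_pos hu hpx).ne',
        Real.log_mul hp.ne' hux.ne', Real.log_mul hu.ne' hpx.ne',
        Real.log_div hux.ne' hpx.ne', hL, Real.log_div hu.ne' hp.ne']
    field_simp
    ring
  -- derivative
  have hderiv : ∀ x > (0:ℝ), HasDerivAt f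
      (((p - u + p * L) * x + p ^ 2 + u * p * (L - 1)) / ((p + x) ^ 2 * (u + x))) x := by
    intro x hx
    have hpx : (0:ℝ) < p + x := by linarith
    have hux : (0:ℝ) < u + x := by linarith
    have h1 : HasDerivAt (fun y : ℝ => u + y) 1 x := by
      simpa using (hasDerivAt_id x).const_add u
    have h2 : HasDerivAt (fun y : ℝ => p + y) 1 x := by
      simpa using (hasDerivAt_id x).const_add p
    have hlogu : HasDerivAt (fun y : ℝ => Real.log (u + y)) (1 / (u + x)) x := by
      simpa using h1.log hux.ne'
    have hlogp : HasDerivAt (fun y : ℝ => Real.log (p + y)) (1 / (p + x)) x := by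
      simpa using h2.log hpx.ne'
    have hdiv : HasDerivAt (fun y : ℝ => p / (p + y))
        ((0 * (p + x) - p * 1) / (p + x) ^ 2) x :=
      (hasDerivAt_const x p).div h2 hpx.ne'
    have hg : HasDerivAt (fun y : ℝ => Real.log (u + y) - Real.log (p + y) - p / (p + y) * L)
        (1 / (u + x) - 1 / (p + x) - (0 * (p + x) - p * 1) / (p + x) ^ 2 * L) x :=
      (hlogu.sub hlogp).sub (hdiv.mul_const L)
    have heq : f =ᶠ[nhds x] fun y : ℝ =>
        Real.log (u + y) - Real.log (p + y) - p / (p + y) * L := by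
      filter_upwards [Ioi_mem_nhds hx] with y hy
      have hpy : (0:ℝ) < p + y := by have : (0:ℝ) < y := hy; linarith
      have huy : (0:ℝ) < u + y := by have : (0:ℝ) < y := hy; linarith
      rw [hform y hy, Real.log_div huy.ne' hpy.ne']
    have hgf := hg.congr_of_eventuallyEq heq
    have hval : 1 / (u + x) - 1 / (p + x) - (0 * (p + x) - p * 1) / (p + x) ^ 2 * L
        = ((p - u + p * L) * x + p ^ 2 + u * p * (L - 1)) / ((p + x) ^ 2 * (u + x)) := by
      field_simp
      ring
    rwa [hval] at hgf
  have hd2 : ∀ x > (0:ℝ), deriv f x =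
      ((p - u + p * L) * x + p ^ 2 + u * p * (L - 1)) / ((p + x) ^ 2 * (u + x)) :=
    fun x hx => (hderiv x hx).deriv
  have hxsD : (p - u + p * L) * xs = p * u - p ^ 2 - p * u * L := by
    rw [hxs, mul_div_cancel₀ _ hD.ne]
  refine ⟨hform, hd2, hxspos, ?_, ?_⟩
  · intro x hx hxlt
    rw [hd2 x hx]
    have hpx : (0:ℝ) < p + x := by linarith
    have hux : (0:ℝ) < u + x := by linarith
    apply div_pos
    · nlinarith [mul_lt_mul_of_neg_left hxlt hD]
    · positivity
  · intro x hxgt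
    have hx : (0:ℝ) < x := lt_trans hxspos hxgt
    rw [hd2 x hx]
    have hpx : (0:ℝ) < p + x := by linarith
    have hux : (0:ℝ) < u + x := by linarith
    apply div_neg_of_neg_of_pos
    · nlinarith [mul_lt_mul_of_neg_left hxgt hD]
    · positivity
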